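/- arXiv:1807.02015 — 2 statements merged into one kernel-verified Lean document; each statement's English description precedes it below -/
import Mathlib

section
/- In the max-plus semiring, if A is an n×n matrix with all entries in [-∞, 0] and α is a vector, then r := A* ⊗ α is the smallest solution of r = A ⊗ r ⊕ α: for any vector r̃ satisfying r̃ = A ⊗ r̃ ⊕ α one has r_i ≤ r̃_i for all i. -/
open Finset

/-- Max-plus matrix-vector product: `(A ⊗ v) i = max_j (A i j + v j)`. -/
def mpMulVec {n : ℕ} (A : Matrix (Fin n) (Fin n) (WithBot ℝ))
    (v : Fin n → WithBot ℝ) : Fin n → WithBot ℝ :=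
  fun i => Finset.univ.sup fun j => A i j + v j

/-- Max-plus matrix-matrix product. -/
def mpMatMul {n : ℕ} (A B : Matrix (Fin n) (Fin n) (WithBot ℝ)) :
    Matrix (Fin n) (Fin n) (WithBot ℝ) :=
  fun i j => Finset.univ.sup fun k => A i k + B k j

/-- The max-plus identity matrix: `0` on the diagonal, `-∞` off the diagonal. -/
def mpId {n : ℕ} : Matrix (Fin n) (Fin n) (WithBot ℝ) :=
  fun i j => if i = j then (0 : WithBot ℝ) else ⊥

/-- Max-plus matrix power. -/
def mpPow {n : ℕ} (A : Matrix (Fin n) (Fin n) (WithBot ℝ)) : ℕ → Matrix (Fin n) (Fin n) (WithBot ℝ)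
  | 0 => mpId
  | k + 1 => mpMatMul A (mpPow A k)

/-- The Kleene star `A* = I ⊕ A ⊕ A² ⊕ ⋯ ⊕ A^{n-1}` in the max-plus semiring. -/
def mpStar {n : ℕ} (A : Matrix (Fin n) (Fin n) (WithBot ℝ)) :
    Matrix (Fin n) (Fin n) (WithBot ℝ) :=
  fun i j => (Finset.range n).sup fun k => mpPow A k i j


/-- If all entries of `A` are in `[-∞, 0]`, then `r := A* ⊗ α` is the smallest solution of
`r = A ⊗ r ⊕ α`: any solution `rr` dominates it componentwise. -/
theorem mpStar_mulVec_smallest {n : ℕ} (hn : 0 < n)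
    (A : Matrix (Fin n) (Fin n) (WithBot ℝ)) (hA : ∀ i j, A i j ≤ 0)
    (α : Fin n → WithBot ℝ) (rr : Fin n → WithBot ℝ)
    (hrr : ∀ i, rr i = mpMulVec A rr i ⊔ α i) :
    ∀ i, mpMulVec (mpStar A) α i ≤ rr i := by
  have hα : ∀ i, α i ≤ rr i := fun i => (hrr i) ▸ le_sup_right
  have hAr : ∀ i, mpMulVec A rr i ≤ rr i := fun i => (hrr i) ▸ le_sup_left
  have key : ∀ k : ℕ, ∀ i j : Fin n, mpPow A k i j + α j ≤ rr i := by
    intro k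
    induction k with
    | zero =>
      intro i j
      by_cases h : i = j
      · subst h
        simpa [mpPow, mpId] using hα i
      · simp [mpPow, mpId, h]
    | succ k ih =>
      intro i j
      have hne : (Finset.univ : Finset (Fin n)).Nonempty := ⟨⟨0, hn⟩, Finset.mem_univ _⟩
      obtain ⟨m, _, hm⟩ := Finset.exists_mem_eq_sup Finset.univ hne
        (fun m => A i m + mpPow A k m j)
      have h1 : mpPow A (k+1) i j + α j = A i m + mpPow A k m j + α j := by
        simp only [mpPow, mpMatMul]
        rw [hm]
      rw [h1, add_assoc]
      calc A i m + (mpPow A k m j + α j) ≤ A i m + rr m :=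
            add_le_add_right (ih m j) _
        _ ≤ mpMulVec A rr i := Finset.le_sup (f := fun m => A i m + rr m) (Finset.mem_univ m)
        _ ≤ rr i := hAr i
  intro i
  apply Finset.sup_le
  intro j _
  have hne : (Finset.range n).Nonempty := ⟨0, Finset.mem_range.mpr hn⟩
  obtain ⟨k, _, hk⟩ := Finset.exists_mem_eq_sup (Finset.range n) hne
    (fun k => mpPow A k i j)
  have : mpStar A i j + α j = mpPow A k i j + α j := by rw [mpStar, hk]
  rw [this]
  exact key k i j
end

section
/- In the max-plus semiring, if A is an n×n matrix with all entries strictly negative (in [-∞, 0)), then the equation r = A ⊗ r ⊕ α has a unique solution r = A* ⊗ α. -/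
open Finset

namespace MPaux

lemma add_bsup {β : Type*} (c : WithBot ℝ) (s : Finset β) (f : β → WithBot ℝ) :
    c + s.sup f = s.sup fun x => c + f x :=
  Finset.comp_sup_eq_sup_comp (c + ·)
    (fun a b => by rw [max_add_add_left]) (WithBot.add_bot c)

lemma bsup_add {β : Type*} (c : WithBot ℝ) (s : Finset β) (f : β → WithBot ℝ) :
    s.sup f + c = s.sup fun x => f x + c :=
  Finset.comp_sup_eq_sup_comp (· + c)
    (fun a b => by rw [max_add_add_right]) (WithBot.bot_add c)

variable {n : ℕ}

lemma mulVec_mono_vec (A : Matrix (Fin n) (Fin n) (WithBot ℝ)) {u v : Fin n → WithBot ℝ}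
    (h : ∀ j, u j ≤ v j) (i : Fin n) : mpMulVec A u i ≤ mpMulVec A v i :=
  Finset.sup_mono_fun fun j _ => add_le_add_right (h j) _

lemma mulVec_mono_mat {A B : Matrix (Fin n) (Fin n) (WithBot ℝ)}
    (h : ∀ i j, A i j ≤ B i j) (v : Fin n → WithBot ℝ) (i : Fin n) :
    mpMulVec A v i ≤ mpMulVec B v i :=
  Finset.sup_mono_fun fun j _ => add_le_add_left (h i j) _

lemma id_mulVec (v : Fin n → WithBot ℝ) (i : Fin n) : mpMulVec mpId v i = v i := by
  apply le_antisymm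
  · apply Finset.sup_le
    intro j _
    by_cases h : i = j
    · simp [mpId, h]
    · simp [mpId, h]
  · calc v i = mpId i i + v i := by simp [mpId]
      _ ≤ _ := Finset.le_sup (f := fun j => mpId i j + v j) (Finset.mem_univ i)

lemma mulVec_assoc (A B : Matrix (Fin n) (Fin n) (WithBot ℝ)) (v : Fin n → WithBot ℝ)
    (i : Fin n) : mpMulVec (mpMatMul A B) v i = mpMulVec A (mpMulVec B v) i := by
  unfold mpMulVec mpMatMul
  simp only [bsup_add, add_bsup]
  rw [Finset.sup_comm]
  simp [add_assoc]

lemma star_mulVec (A : Matrix (Fin n) (Fin n) (WithBot ℝ)) (α : Fin n → WithBot ℝ) (i : Fin n) :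
    mpMulVec (mpStar A) α i = (Finset.range n).sup fun k => mpMulVec (mpPow A k) α i := by
  unfold mpMulVec mpStar
  simp only [bsup_add]
  rw [Finset.sup_comm]

lemma mulVec_sup (A : Matrix (Fin n) (Fin n) (WithBot ℝ)) (u v : Fin n → WithBot ℝ) (i : Fin n) :
    mpMulVec A (fun j => u j ⊔ v j) i = mpMulVec A u i ⊔ mpMulVec A v i := by
  unfold mpMulVec
  rw [← Finset.sup_sup (s := (univ : Finset (Fin n))) (f := fun j => A i j + u j)
      (g := fun j => A i j + v j)]
  apply Finset.sup_congr rfl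
  intro j _
  show A i j + (u j ⊔ v j) = (A i j + u j) ⊔ (A i j + v j)
  rw [max_add_add_left]

end MPaux

section
variable {n : ℕ}

/-- Weight of the walk `v 0 → v 1 → ⋯ → v m`. -/
def wt (A : Matrix (Fin n) (Fin n) (WithBot ℝ)) (v : ℕ → Fin n) (m : ℕ) : WithBot ℝ :=
  ∑ t ∈ Finset.range m, A (v t) (v (t + 1))

lemma wt_congr {A : Matrix (Fin n) (Fin n) (WithBot ℝ)} {v w : ℕ → Fin n} {m : ℕ}
    (h : ∀ t ≤ m, v t = w t) : wt A v m = wt A w m :=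
  Finset.sum_congr rfl fun t ht => by
    have ht' := Finset.mem_range.1 ht
    rw [h t (by omega), h (t + 1) (by omega)]

lemma wt_succ (A : Matrix (Fin n) (Fin n) (WithBot ℝ)) (v : ℕ → Fin n) (m : ℕ) :
    wt A v (m + 1) = A (v 0) (v 1) + wt A (fun t => v (t + 1)) m := by
  unfold wt
  rw [Finset.sum_range_succ']
  rw [add_comm]

/-- Vertex sequence of the walk starting at `i` with successive vertices given by `p`. -/
def vOf : {m : ℕ} → Fin n → (Fin m → Fin n) → ℕ → Fin n
  | _, i, _, 0 => i
  | 0, i, _, _ + 1 => i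
  | _ + 1, _, p, t + 1 => vOf (p 0) (Fin.tail p) t

lemma vOf_zero {m : ℕ} (i : Fin n) (p : Fin m → Fin n) : vOf i p 0 = i := by
  cases m <;> rfl

lemma vOf_cons {m : ℕ} (i k : Fin n) (q : Fin m → Fin n) (t : ℕ) :
    vOf i (Fin.cons k q) (t + 1) = vOf k q t := rfl

/-- Cost of a path encoded by `p`, required to start at `i` and end at `j`. -/
def pcost (A : Matrix (Fin n) (Fin n) (WithBot ℝ)) (m : ℕ) (i j : Fin n)
    (p : Fin m → Fin n) : WithBot ℝ :=
  if vOf i p m = j then wt A (vOf i p) m else ⊥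

lemma pcost_cons (A : Matrix (Fin n) (Fin n) (WithBot ℝ)) (m : ℕ) (i j k : Fin n)
    (q : Fin m → Fin n) :
    pcost A (m + 1) i j (Fin.cons k q) = A i k + pcost A m k j q := by
  unfold pcost
  rw [vOf_cons]
  have hwt : wt A (vOf i (Fin.cons k q)) (m + 1) = A i k + wt A (vOf k q) m := by
    rw [wt_succ]
    rw [vOf_zero, vOf_cons, vOf_zero]
    congr 1
  by_cases h : vOf k q m = j
  · simp only [h, if_true, hwt]
  · simp only [h, if_false, WithBot.add_bot]

lemma pow_le_sup_pcost (A : Matrix (Fin n) (Fin n) (WithBot ℝ)) :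
    ∀ (m : ℕ) (i j : Fin n),
      mpPow A m i j ≤ (Finset.univ : Finset (Fin m → Fin n)).sup (pcost A m i j) := by
  intro m
  induction m with
  | zero =>
    intro i j
    have : pcost A 0 i j finZeroElim = mpPow A 0 i j := by
      unfold pcost wt mpPow mpId
      rw [vOf_zero]
      simp [mpId]
    rw [← this]
    exact Finset.le_sup (Finset.mem_univ _)
  | succ m ih =>
    intro i j
    show Finset.univ.sup (fun k => A i k + mpPow A m k j) ≤ _
    apply Finset.sup_le
    intro k _
    calc A i k + mpPow A m k j
        ≤ A i k + (Finset.univ : Finset (Fin m → Fin n)).sup (pcost A m k j) :=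
          add_le_add_right (ih k j) _
      _ = (Finset.univ : Finset (Fin m → Fin n)).sup fun q => A i k + pcost A m k j q :=
          MPaux.add_bsup _ _ _
      _ ≤ _ := by
          apply Finset.sup_le
          intro q _
          rw [← pcost_cons]
          exact Finset.le_sup (Finset.mem_univ _)

lemma wt_le_pow (A : Matrix (Fin n) (Fin n) (WithBot ℝ)) :
    ∀ (m : ℕ) (v : ℕ → Fin n) (j : Fin n), v m = j → wt A v m ≤ mpPow A m (v 0) j := by
  intro m
  induction m with
  | zero =>
    intro v j hj
    show wt A v 0 ≤ mpId (v 0) j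
    unfold wt mpId
    simp [← hj]
  | succ m ih =>
    intro v j hj
    rw [wt_succ]
    have h1 : wt A (fun t => v (t + 1)) m ≤ mpPow A m (v 1) j := ih _ j hj
    calc A (v 0) (v 1) + wt A (fun t => v (t + 1)) m
        ≤ A (v 0) (v 1) + mpPow A m (v 1) j := add_le_add_right h1 _
      _ ≤ _ := Finset.le_sup (f := fun k => A (v 0) k + mpPow A m k j) (Finset.mem_univ (v 1))

lemma wt_surgery (A : Matrix (Fin n) (Fin n) (WithBot ℝ)) (hA : ∀ i j, A i j < 0)
    {v : ℕ → Fin n} {a b m : ℕ} (hab : a < b) (hbm : b ≤ m) (hv : v a = v b) :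
    wt A v m ≤ wt A (fun t => if t < a then v t else v (t + (b - a))) (m - (b - a)) := by
  set d := b - a with hd
  set v' : ℕ → Fin n := fun t => if t < a then v t else v (t + d) with hv'
  set f : ℕ → WithBot ℝ := fun t => A (v t) (v (t + 1)) with hf
  set g : ℕ → WithBot ℝ := fun t => A (v' t) (v' (t + 1)) with hg
  have hg_eq_f : ∀ t < a, g t = f t := by
    intro t ht
    simp only [hg, hf, hv']
    rw [if_pos ht]
    by_cases h1 : t + 1 < a
    · rw [if_pos h1]
    · rw [if_neg h1]
      have h1' : t + 1 = a := by omega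
      have e : t + 1 + d = b := by omega
      rw [e, ← hv, h1']
  have key1 : wt A v m =
      (∑ t ∈ Finset.Ico 0 a, f t + ∑ t ∈ Finset.Ico a b, f t) + ∑ t ∈ Finset.Ico b m, f t := by
    unfold wt
    rw [Finset.sum_Ico_consecutive _ (Nat.zero_le a) hab.le,
      Finset.sum_Ico_consecutive _ (Nat.zero_le b) hbm, Finset.range_eq_Ico]
  have key2 : wt A v' (m - d) = ∑ t ∈ Finset.Ico 0 a, g t + ∑ t ∈ Finset.Ico a (m - d), g t := by
    unfold wt
    rw [Finset.sum_Ico_consecutive _ (Nat.zero_le a) (by omega), Finset.range_eq_Ico]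
  have ha : ∑ t ∈ Finset.Ico 0 a, g t = ∑ t ∈ Finset.Ico 0 a, f t :=
    Finset.sum_congr rfl fun t ht => hg_eq_f t (Finset.mem_Ico.1 ht).2
  have hmid : ∑ t ∈ Finset.Ico a b, f t ≤ 0 :=
    Finset.sum_nonpos fun t _ => (hA _ _).le
  have htail : ∑ t ∈ Finset.Ico a (m - d), g t = ∑ t ∈ Finset.Ico b m, f t := by
    rw [Finset.sum_Ico_eq_sum_range, Finset.sum_Ico_eq_sum_range]
    have hlen : m - d - a = m - b := by omega
    rw [hlen]
    apply Finset.sum_congr rfl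
    intro t _
    simp only [hg, hf, hv']
    rw [if_neg (by omega), if_neg (by omega)]
    have e1 : a + t + d = b + t := by omega
    have e2 : a + t + 1 + d = b + t + 1 := by omega
    rw [e1, e2]
  rw [key1, key2, ha, htail]
  calc (∑ t ∈ Finset.Ico 0 a, f t + ∑ t ∈ Finset.Ico a b, f t) + ∑ t ∈ Finset.Ico b m, f t
      ≤ (∑ t ∈ Finset.Ico 0 a, f t + 0) + ∑ t ∈ Finset.Ico b m, f t := by
        exact add_le_add_left (add_le_add_right hmid _) _
    _ = ∑ t ∈ Finset.Ico 0 a, f t + ∑ t ∈ Finset.Ico b m, f t := by rw [add_zero]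

end

section
variable {n : ℕ}

lemma pow_n_le_star (hn : 0 < n) (A : Matrix (Fin n) (Fin n) (WithBot ℝ))
    (hA : ∀ i j, A i j < 0) (i j : Fin n) : mpPow A n i j ≤ mpStar A i j := by
  refine (pow_le_sup_pcost A n i j).trans (Finset.sup_le ?_)
  intro p _
  unfold pcost
  by_cases hend : vOf i p n = j
  · rw [if_pos hend]
    set v : ℕ → Fin n := vOf i p with hvdef
    -- pigeonhole on the n+1 vertices v 0, ..., v n
    have hcard : Fintype.card (Fin n) < Fintype.card (Fin (n + 1)) := by simp
    obtain ⟨t1, t2, hne, heq⟩ :=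
      Fintype.exists_ne_map_eq_of_card_lt (fun t : Fin (n + 1) => v t.val) hcard
    -- get a < b ≤ n with v a = v b
    obtain ⟨a, b, hab, hbn, hvab⟩ : ∃ a b : ℕ, a < b ∧ b ≤ n ∧ v a = v b := by
      rcases lt_or_gt_of_ne hne with h | h
      · exact ⟨t1.val, t2.val, h, Nat.lt_succ_iff.1 t2.isLt, heq⟩
      · exact ⟨t2.val, t1.val, h, Nat.lt_succ_iff.1 t1.isLt, heq.symm⟩
    set d := b - a with hd
    set v' : ℕ → Fin n := fun t => if t < a then v t else v (t + d) with hv'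
    have h1 : wt A v n ≤ wt A v' (n - d) := wt_surgery A hA hab hbn hvab
    have hv'0 : v' 0 = v 0 := by
      by_cases h0 : 0 < a
      · simp [hv', h0]
      · have ha0 : a = 0 := by omega
        simp only [hv', if_neg (by omega : ¬ (0:ℕ) < a)]
        rw [show 0 + d = b by omega, ← hvab, ha0]
    have hv'end : v' (n - d) = j := by
      simp only [hv', if_neg (by omega : ¬ n - d < a)]
      rw [show n - d + d = n by omega]
      exact hend
    have h2 : wt A v' (n - d) ≤ mpPow A (n - d) (v' 0) j := wt_le_pow A (n - d) v' j hv'end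
    have hv0 : v 0 = i := vOf_zero i p
    rw [hv'0, hv0] at h2
    refine h1.trans (h2.trans ?_)
    exact Finset.le_sup (f := fun k => mpPow A k i j) (Finset.mem_range.2 (by omega))
  · rw [if_neg hend]
    exact bot_le

lemma pow_le_star (hn : 0 < n) (A : Matrix (Fin n) (Fin n) (WithBot ℝ))
    (hA : ∀ i j, A i j < 0) {m : ℕ} (hm : m ≤ n) (i j : Fin n) :
    mpPow A m i j ≤ mpStar A i j := by
  rcases lt_or_eq_of_le hm with h | h
  · exact Finset.le_sup (f := fun k => mpPow A k i j) (Finset.mem_range.2 h)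
  · rw [h]; exact pow_n_le_star hn A hA i j

lemma matmul_star_le (hn : 0 < n) (A : Matrix (Fin n) (Fin n) (WithBot ℝ))
    (hA : ∀ i j, A i j < 0) (i j : Fin n) :
    mpMatMul A (mpStar A) i j ≤ mpStar A i j := by
  show (Finset.univ.sup fun k => A i k + mpStar A k j) ≤ _
  apply Finset.sup_le
  intro k _
  show A i k + ((Finset.range n).sup fun l => mpPow A l k j) ≤ _
  rw [MPaux.add_bsup]
  apply Finset.sup_le
  intro l hl
  have h1 : A i k + mpPow A l k j ≤ mpPow A (l + 1) i j :=
    Finset.le_sup (f := fun k' => A i k' + mpPow A l k' j) (Finset.mem_univ k)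
  exact h1.trans (pow_le_star hn A hA (Nat.succ_le_of_lt (Finset.mem_range.1 hl)) i j)

end

/-- If all entries of `A` are strictly negative (possibly `-∞`), then the equation
`r = A ⊗ r ⊕ α` has a unique solution, namely `r = A* ⊗ α`. -/
theorem mpStar_mulVec_unique {n : ℕ} (hn : 0 < n)
    (A : Matrix (Fin n) (Fin n) (WithBot ℝ)) (hA : ∀ i j, A i j < 0)
    (α : Fin n → WithBot ℝ) :
    (∀ i, mpMulVec (mpStar A) α i = mpMulVec A (mpMulVec (mpStar A) α) i ⊔ α i) ∧
      ∀ r : Fin n → WithBot ℝ, (∀ i, r i = mpMulVec A r i ⊔ α i) →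
        r = mpMulVec (mpStar A) α := by
  -- L1 : A (A* α) ≤ A* α
  have L1 : ∀ i, mpMulVec A (mpMulVec (mpStar A) α) i ≤ mpMulVec (mpStar A) α i := by
    intro i
    rw [← MPaux.mulVec_assoc]
    exact MPaux.mulVec_mono_mat (matmul_star_le hn A hA) α i
  -- L2 : α ≤ A* α
  have L2 : ∀ i, α i ≤ mpMulVec (mpStar A) α i := by
    intro i
    rw [MPaux.star_mulVec]
    have h0 : α i = mpMulVec (mpPow A 0) α i := (MPaux.id_mulVec α i).symm
    rw [h0]
    exact Finset.le_sup (f := fun k => mpMulVec (mpPow A k) α i) (Finset.mem_range.2 hn)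
  -- L3 : A* α ≤ A (A* α) ⊔ α
  have L3 : ∀ i, mpMulVec (mpStar A) α i ≤ mpMulVec A (mpMulVec (mpStar A) α) i ⊔ α i := by
    intro i
    rw [MPaux.star_mulVec]
    apply Finset.sup_le
    intro k hk
    match k with
    | 0 =>
      rw [show mpPow A 0 = mpId from rfl, MPaux.id_mulVec α i]
      exact le_sup_right
    | k + 1 =>
      have he : mpMulVec (mpPow A (k + 1)) α i = mpMulVec A (mpMulVec (mpPow A k) α) i :=
        MPaux.mulVec_assoc A (mpPow A k) α i
      rw [he]
      refine le_trans (MPaux.mulVec_mono_vec A (fun j => ?_) i) le_sup_left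
      rw [MPaux.star_mulVec]
      exact Finset.le_sup (f := fun l => mpMulVec (mpPow A l) α j)
        (Finset.mem_range.2 (by have := Finset.mem_range.1 hk; omega))
  constructor
  · intro i
    exact le_antisymm (L3 i) (sup_le (L1 i) (L2 i))
  · intro r hr
    -- Step 1 : A* α ≤ r
    have s1 : ∀ (k : ℕ) (i : Fin n), mpMulVec (mpPow A k) α i ≤ r i := by
      intro k
      induction k with
      | zero =>
        intro i
        rw [show mpPow A 0 = mpId from rfl, MPaux.id_mulVec α i, hr i]
        exact le_sup_right
      | succ k ih =>
        intro i
        rw [show mpPow A (k + 1) = mpMatMul A (mpPow A k) from rfl,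
          MPaux.mulVec_assoc A (mpPow A k) α i]
        refine le_trans (MPaux.mulVec_mono_vec A ih i) ?_
        rw [hr i]
        exact le_sup_left
    have star_le_r : ∀ i, mpMulVec (mpStar A) α i ≤ r i := by
      intro i
      rw [MPaux.star_mulVec]
      exact Finset.sup_le fun k _ => s1 k i
    -- Step 2 : r ≤ A^k r ⊔ A* α
    have s2 : ∀ (k : ℕ) (i : Fin n),
        r i ≤ mpMulVec (mpPow A k) r i ⊔ mpMulVec (mpStar A) α i := by
      intro k
      induction k with
      | zero =>
        intro i
        rw [show mpPow A 0 = mpId from rfl, MPaux.id_mulVec r i]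
        exact le_sup_left
      | succ k ih =>
        intro i
        rw [hr i]
        apply sup_le
        · calc mpMulVec A r i
              ≤ mpMulVec A (fun j => mpMulVec (mpPow A k) r j ⊔ mpMulVec (mpStar A) α j) i :=
                MPaux.mulVec_mono_vec A ih i
            _ = mpMulVec A (mpMulVec (mpPow A k) r) i ⊔ mpMulVec A (mpMulVec (mpStar A) α) i :=
                MPaux.mulVec_sup A _ _ i
            _ ≤ mpMulVec (mpPow A (k + 1)) r i ⊔ mpMulVec (mpStar A) α i := by
                apply sup_le_sup
                · rw [show mpPow A (k + 1) = mpMatMul A (mpPow A k) from rfl,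
                    MPaux.mulVec_assoc A (mpPow A k) r i]
                · exact L1 i
        · exact le_trans (L2 i) le_sup_right
    -- bounds
    obtain ⟨c, hc, hAc⟩ : ∃ c : ℝ, c < 0 ∧ ∀ i j, A i j ≤ (c : WithBot ℝ) := by
      have hSlt : ((Finset.univ : Finset (Fin n × Fin n)).sup fun x => A x.1 x.2) < 0 :=
        (Finset.sup_lt_iff (WithBot.bot_lt_coe 0)).2 fun x _ => hA x.1 x.2
      have hle : ∀ i j, A i j ≤ (Finset.univ : Finset (Fin n × Fin n)).sup fun x => A x.1 x.2 :=
        fun i j => Finset.le_sup (f := fun x : Fin n × Fin n => A x.1 x.2) (Finset.mem_univ (i, j))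
      rcases hS : ((Finset.univ : Finset (Fin n × Fin n)).sup fun x => A x.1 x.2) with _ | s
      · exact ⟨-1, by norm_num, fun i j => ((hle i j).trans (le_of_eq hS)).trans bot_le⟩
      · refine ⟨s, ?_, fun i j => (hle i j).trans (le_of_eq hS)⟩
        rw [hS] at hSlt
        simpa [WithBot.some_eq_coe] using hSlt
    obtain ⟨M, hM⟩ : ∃ M : ℝ, ∀ j, r j ≤ (M : WithBot ℝ) := by
      have hle : ∀ j, r j ≤ Finset.univ.sup r := fun j => Finset.le_sup (Finset.mem_univ j)
      rcases hT : (Finset.univ.sup r : WithBot ℝ) with _ | t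
      · exact ⟨0, fun j => ((hle j).trans (le_of_eq hT)).trans bot_le⟩
      · exact ⟨t, fun j => (hle j).trans (le_of_eq hT)⟩
    -- Step 3 : A^k r ≤ k*c + M
    have s3 : ∀ (k : ℕ) (i : Fin n),
        mpMulVec (mpPow A k) r i ≤ ((k * c + M : ℝ) : WithBot ℝ) := by
      intro k
      induction k with
      | zero =>
        intro i
        rw [show mpPow A 0 = mpId from rfl, MPaux.id_mulVec r i]
        have he : ((0:ℕ):ℝ) * c + M = M := by push_cast; ring
        rw [he]
        exact hM i
      | succ k ih =>
        intro i
        rw [show mpPow A (k + 1) = mpMatMul A (mpPow A k) from rfl,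
          MPaux.mulVec_assoc A (mpPow A k) r i]
        apply Finset.sup_le
        intro j _
        calc A i j + mpMulVec (mpPow A k) r j
            ≤ (c : WithBot ℝ) + ((k * c + M : ℝ) : WithBot ℝ) := add_le_add (hAc i j) (ih j)
          _ = (((k : ℕ) + 1 : ℕ) * c + M : ℝ) := by
              rw [← WithBot.coe_add]
              congr 1
              push_cast
              ring
    -- conclude
    funext i
    refine le_antisymm ?_ (star_le_r i)
    by_contra hcon
    have hlt : mpMulVec (mpStar A) α i < r i := lt_of_not_ge hcon
    have hrbot : r i ≠ ⊥ := fun h => by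
      rw [h] at hlt
      exact absurd hlt (by simp)
    obtain ⟨ρ, hρ⟩ := WithBot.ne_bot_iff_exists.1 hrbot
    have hρk : ∀ k : ℕ, ρ ≤ k * c + M := by
      intro k
      have h := s2 k i
      rcases le_sup_iff.1 h with h' | h'
      · have := h'.trans (s3 k i)
        rw [← hρ] at this
        exact_mod_cast this
      · exact absurd h' (not_le_of_gt hlt)
    obtain ⟨k, hk⟩ := exists_nat_gt ((M - ρ) / (-c))
    have hck : (k : ℝ) * c + M < ρ := by
      have hc' : (0:ℝ) < -c := by linarith
      have := (div_lt_iff₀ hc').1 hk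
      nlinarith
    exact absurd (hρk k) (not_le_of_gt hck)
end
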